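/- arXiv:2307.16756 — 3 statements merged into one kernel-verified Lean document; each statement's English description precedes it below -/
import Mathlib

section
/- Let c ≠ t in Fin n, S : Finset (Fin n), and α ∈ ℝ. Then CNOT_{c,t} · exp(−j·α·Z_S) · CNOT_{c,t} = exp(−j·α·Z_{S'}), where S' = S Δ {c} if t ∈ S and S' = S otherwise (Δ is symmetric difference). -/
open Matrix

noncomputable section

/-- The Pauli-Z monomial `Z_S`: the `2^n × 2^n` diagonal matrix (rows and columns indexed
by bitstrings `x : Fin n → Bool`) whose diagonal entry at `x` is
`(-1) ^ |{i ∈ S : x i = true}|`. -/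
def PauliZ {n : ℕ} (S : Finset (Fin n)) : Matrix (Fin n → Bool) (Fin n → Bool) ℂ :=
  Matrix.diagonal fun x => (-1 : ℂ) ^ (S.filter fun i => x i = true).card

/-- The action of `CNOT c t` on bitstrings: flip bit `t` when bit `c` is set. -/
def cnotFun {n : ℕ} (c t : Fin n) (x : Fin n → Bool) : Fin n → Bool :=
  Function.update x t (xor (x t) (x c))

/-- The CNOT gate with control `c` and target `t`: the permutation matrix sending the
standard basis vector `e_x` to `e_(cnotFun c t x)`. -/
def CNOT {n : ℕ} (c t : Fin n) : Matrix (Fin n → Bool) (Fin n → Bool) ℂ :=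
  Matrix.of fun y x => if y = cnotFun c t x then 1 else 0

lemma cnotFun_invol {n : ℕ} (c t : Fin n) (hct : c ≠ t) (x : Fin n → Bool) :
    cnotFun c t (cnotFun c t x) = x := by
  funext i
  simp only [cnotFun, Function.update_apply]
  rcases eq_or_ne i t with rfl | h
  · simp only [if_pos rfl, if_neg hct]
    cases x i <;> cases x c <;> rfl
  · simp [h]

lemma CNOT_mul_CNOT {n : ℕ} (c t : Fin n) (hct : c ≠ t) :
    CNOT c t * CNOT c t = 1 := by
  ext y x
  simp only [CNOT, Matrix.mul_apply, Matrix.of_apply, Matrix.one_apply]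
  rw [Finset.sum_eq_single (cnotFun c t x)]
  · rcases eq_or_ne y x with rfl | h
    · simp [cnotFun_invol c t hct]
    · have : y ≠ cnotFun c t (cnotFun c t x) := by rw [cnotFun_invol c t hct]; exact h
      simp [this, h]
  · intro b _ hb
    rw [if_neg hb, mul_zero]
  · simp

lemma pz_prod {n : ℕ} (S : Finset (Fin n)) (x : Fin n → Bool) :
    (-1 : ℂ) ^ (S.filter fun i => x i = true).card
      = ∏ i ∈ S, (if x i = true then (-1 : ℂ) else 1) := by
  rw [Finset.prod_ite, Finset.prod_const, Finset.prod_const_one, mul_one]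

lemma diag_key {n : ℕ} (c t : Fin n) (hct : c ≠ t) (S : Finset (Fin n)) (ht : t ∈ S)
    (x : Fin n → Bool) :
    (-1 : ℂ) ^ (S.filter fun i => cnotFun c t x i = true).card
      = (-1 : ℂ) ^ ((symmDiff S {c}).filter fun i => x i = true).card := by
  set g : Bool → ℂ := fun b => if b = true then (-1 : ℂ) else 1 with hg
  have hg2 : ∀ b, g b * g b = 1 := by intro b; cases b <;> simp [hg]
  have hgx : ∀ a b, g (xor a b) = g a * g b := by
    intro a b; cases a <;> cases b <;> simp [hg]
  rw [pz_prod, pz_prod]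
  have hL : (∏ i ∈ S, g (cnotFun c t x i)) = (∏ i ∈ S, g (x i)) * g (x c) := by
    calc (∏ i ∈ S, g (cnotFun c t x i))
        = (∏ i ∈ S.erase t, g (cnotFun c t x i)) * g (cnotFun c t x t) :=
          (Finset.prod_erase_mul S _ ht).symm
      _ = (∏ i ∈ S.erase t, g (x i)) * (g (x t) * g (x c)) := by
          rw [← hgx]
          congr 1
          · refine Finset.prod_congr rfl fun i hi => ?_
            have : i ≠ t := (Finset.mem_erase.mp hi).1
            simp [cnotFun, Function.update_apply, this]
          · simp [cnotFun]
      _ = ((∏ i ∈ S.erase t, g (x i)) * g (x t)) * g (x c) := by ring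
      _ = (∏ i ∈ S, g (x i)) * g (x c) := by rw [Finset.prod_erase_mul S _ ht]
  have hR : (∏ i ∈ symmDiff S {c}, g (x i)) = (∏ i ∈ S, g (x i)) * g (x c) := by
    by_cases hc : c ∈ S
    · have hsd : symmDiff S {c} = S.erase c := by
        ext i
        simp only [Finset.mem_symmDiff, Finset.mem_singleton, Finset.mem_erase]
        constructor
        · rintro (⟨hi, hne⟩ | ⟨rfl, h⟩) <;> [exact ⟨hne, hi⟩; exact absurd hc h]
        · rintro ⟨hne, hi⟩; exact Or.inl ⟨hi, hne⟩
      rw [hsd]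
      have := Finset.prod_erase_mul S (fun i => g (x i)) hc
      calc (∏ i ∈ S.erase c, g (x i))
          = (∏ i ∈ S.erase c, g (x i)) * (g (x c) * g (x c)) := by rw [hg2, mul_one]
        _ = ((∏ i ∈ S.erase c, g (x i)) * g (x c)) * g (x c) := by ring
        _ = (∏ i ∈ S, g (x i)) * g (x c) := by rw [this]
    · have hsd : symmDiff S {c} = insert c S := by
        ext i
        simp only [Finset.mem_symmDiff, Finset.mem_singleton, Finset.mem_insert]
        constructor
        · rintro (⟨hi, _⟩ | ⟨rfl, _⟩) <;> [exact Or.inr hi; exact Or.inl rfl]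
        · rintro (rfl | hi) <;> [exact Or.inr ⟨rfl, hc⟩; exact Or.inl ⟨hi, fun h => hc (h ▸ hi)⟩]
      rw [hsd, Finset.prod_insert hc, mul_comm]
  rw [hL, hR]

lemma diag_conj {n : ℕ} (c t : Fin n) (hct : c ≠ t) (S : Finset (Fin n)) :
    CNOT c t * PauliZ S * CNOT c t
      = PauliZ (if t ∈ S then symmDiff S {c} else S) := by
  have key : ∀ x : Fin n → Bool,
      (-1 : ℂ) ^ (S.filter fun i => cnotFun c t x i = true).card
        = (-1 : ℂ) ^ (((if t ∈ S then symmDiff S {c} else S).filter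
            fun i => x i = true)).card := by
    intro x
    by_cases ht : t ∈ S
    · rw [if_pos ht]; exact diag_key c t hct S ht x
    · rw [if_neg ht]
      congr 2
      refine Finset.filter_congr fun i hi => ?_
      have : i ≠ t := fun h => ht (h ▸ hi)
      simp [cnotFun, Function.update_apply, this]
  ext y x
  rw [Matrix.mul_assoc, Matrix.mul_apply]
  have hPC : ∀ a, (PauliZ S * CNOT c t) a x
      = if a = cnotFun c t x then (-1 : ℂ) ^ (S.filter fun i => a i = true).card else 0 := by
    intro a
    rw [PauliZ, Matrix.diagonal_mul]
    simp [CNOT, mul_ite]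
  simp only [CNOT, Matrix.of_apply] at hPC ⊢
  simp only [hPC]
  rw [Finset.sum_eq_single (cnotFun c t x)]
  · rw [if_pos rfl, cnotFun_invol c t hct, key x]
    rcases eq_or_ne y x with rfl | h
    · simp [PauliZ, Matrix.diagonal_apply_eq]
    · simp [PauliZ, Matrix.diagonal_apply_ne _ h, h]
  · intro b _ hb
    rw [if_neg hb, mul_zero]
  · simp

/-- For `c ≠ t` and `α ∈ ℝ`, conjugating the phase-rotation operator
`exp (-j·α·Z_S)` by `CNOT c t` yields `exp (-j·α·Z_(S'))`, where `S' = S Δ {c}` if `t ∈ S`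
and `S' = S` otherwise. -/
theorem cnot_conj_rotation {n : ℕ} (c t : Fin n) (hct : c ≠ t) (S : Finset (Fin n))
    (α : ℝ) :
    CNOT c t * NormedSpace.exp ((-Complex.I * (α : ℂ)) • PauliZ S) * CNOT c t =
      NormedSpace.exp ((-Complex.I * (α : ℂ)) •
        PauliZ (if t ∈ S then symmDiff S {c} else S)) := by
  have h1 := CNOT_mul_CNOT c t hct
  have hu : IsUnit (CNOT c t) :=
    @isUnit_of_invertible _ _ _ (invertibleOfRightInverse _ _ h1)
  have hinv : (CNOT c t)⁻¹ = CNOT c t := Matrix.inv_eq_right_inv h1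
  rw [← diag_conj c t hct S]
  have h2 : (-Complex.I * (α : ℂ)) • (CNOT c t * PauliZ S * CNOT c t)
      = CNOT c t * ((-Complex.I * (α : ℂ)) • PauliZ S) * (CNOT c t)⁻¹ := by
    rw [hinv, Matrix.mul_smul, Matrix.smul_mul]
  rw [h2, Matrix.exp_conj _ _ hu, hinv]
end
end

section
/- Let S : Finset (Fin n), let a ∈ Fin n with a ∉ S, let i_1, …, i_k be an enumeration of S, let α ∈ ℝ, and set V := CNOT_{i_1,a} · CNOT_{i_2,a} ⋯ CNOT_{i_k,a}. Then (1) V · exp(−j·α·Z_{{a}}) · V = exp(−j·α·Z_{S ∪ {a}}), and (2) for every bitstring x : Fin n → Bool with x a = false, V · exp(−j·α·Z_{{a}}) · V · e_x = exp(−j·α·(−1)^{|{i ∈ S : x i = true}|}) · e_x, i.e. on states where the ancilla qubit a is |0⟩ the circuit acts as exp(−j·α·Z_S). -/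
open Matrix

noncomputable section

/-- The standard (computational) basis vector `e_x`. -/
def stdVec {n : ℕ} (x : Fin n → Bool) : (Fin n → Bool) → ℂ :=
  fun y => if y = x then 1 else 0

namespace AncillaAux

/-- the XOR-accumulated parity -/
def pb {n : ℕ} (l : List (Fin n)) (x : Fin n → Bool) : Bool :=
  l.foldr (fun i b => xor (x i) b) false

/-- the action of the CNOT cascade on bitstrings -/
def g {n : ℕ} (a : Fin n) (l : List (Fin n)) (x : Fin n → Bool) : Fin n → Bool :=
  Function.update x a (xor (pb l x) (x a))

lemma pb_congr {n : ℕ} (l : List (Fin n)) {x y : Fin n → Bool}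
    (h : ∀ i ∈ l, x i = y i) : pb l x = pb l y := by
  induction l with
  | nil => rfl
  | cons c l ih =>
      simp only [pb, List.foldr_cons] at *
      rw [h c (List.mem_cons_self (a := c) (l := l)), ih fun i hi => h i (List.mem_cons_of_mem c hi)]

lemma pb_cons {n : ℕ} (c : Fin n) (l : List (Fin n)) (x : Fin n → Bool) :
    pb (c :: l) x = xor (x c) (pb l x) := rfl

lemma g_apply_a {n : ℕ} (a : Fin n) (l : List (Fin n)) (x : Fin n → Bool) :
    g a l x a = xor (pb l x) (x a) := Function.update_self a _ x

lemma g_apply_ne {n : ℕ} (a : Fin n) (l : List (Fin n)) (x : Fin n → Bool)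
    {i : Fin n} (hi : i ≠ a) : g a l x i = x i := Function.update_of_ne hi _ x

lemma g_involutive {n : ℕ} (a : Fin n) (l : List (Fin n)) (ha : a ∉ l) (x : Fin n → Bool) :
    g a l (g a l x) = x := by
  have hpb : pb l (g a l x) = pb l x :=
    pb_congr l fun i hi => g_apply_ne a l x (fun h => ha (h ▸ hi))
  funext i
  by_cases h : i = a
  · subst h
    rw [g_apply_a, hpb, g_apply_a, ← Bool.xor_assoc, Bool.xor_self, Bool.false_xor]
  · rw [g_apply_ne a l _ h, g_apply_ne a l _ h]

lemma cnot_g {n : ℕ} (a c : Fin n) (hc : c ≠ a) (l : List (Fin n)) (x : Fin n → Bool) :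
    cnotFun c a (g a l x) = g a (c :: l) x := by
  unfold cnotFun g
  rw [Function.update_idem]
  rw [Function.update_self, Function.update_of_ne hc, pb_cons]
  cases x c <;> cases pb l x <;> cases x a <;> rfl

lemma prod_cnot {n : ℕ} (a : Fin n) (l : List (Fin n)) (ha : a ∉ l) :
    (l.map fun i => CNOT i a).prod
      = Matrix.of fun y x => if y = g a l x then 1 else 0 := by
  induction l with
  | nil =>
      ext y x
      simp [Matrix.one_apply, g, pb, Function.update_eq_self, eq_comm]
  | cons c l ih =>
      have hc : c ≠ a := fun h => ha (h ▸ List.mem_cons_self (a := c) (l := l))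
      have ha' : a ∉ l := fun h => ha (List.mem_cons_of_mem c h)
      rw [List.map_cons, List.prod_cons, ih ha']
      ext y x
      rw [Matrix.mul_apply]
      rw [Finset.sum_eq_single (g a l x)]
      · simp only [CNOT, Matrix.of_apply, cnot_g a c hc l x, if_pos rfl, if_true, mul_one]
      · intro z _ hz
        simp only [Matrix.of_apply]
        rw [if_neg hz, mul_zero]
      · intro h; exact absurd (Finset.mem_univ _) h

lemma conj_diagonal {n : ℕ} (a : Fin n) (l : List (Fin n)) (ha : a ∉ l)
    (d : (Fin n → Bool) → ℂ) :
    (l.map fun i => CNOT i a).prod * Matrix.diagonal d * (l.map fun i => CNOT i a).prod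
      = Matrix.diagonal fun x => d (g a l x) := by
  rw [prod_cnot a l ha]
  ext y x
  rw [Matrix.mul_apply]
  rw [Finset.sum_eq_single (g a l x)
      (fun z _ hz => by simp only [Matrix.of_apply]; rw [if_neg hz, mul_zero])
      (fun h => absurd (Finset.mem_univ _) h)]
  simp only [Matrix.of_apply, if_pos rfl, if_true, mul_one]
  rw [Matrix.mul_apply]
  rw [Finset.sum_eq_single (g a l x)
      (fun w _ hw => by rw [Matrix.diagonal_apply_ne _ hw, mul_zero])
      (fun h => absurd (Finset.mem_univ _) h)]
  rw [Matrix.diagonal_apply_eq]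
  simp only [Matrix.of_apply, g_involutive a l ha x]
  by_cases h : y = x
  · subst h
    rw [if_pos rfl, one_mul, Matrix.diagonal_apply_eq]
  · rw [if_neg h, zero_mul, Matrix.diagonal_apply_ne _ h]

lemma pb_eq_parity {n : ℕ} (l : List (Fin n)) (hl : l.Nodup) (x : Fin n → Bool) :
    ((if pb l x then -1 else 1 : ℂ))
      = (-1 : ℂ) ^ (l.toFinset.filter fun i => x i = true).card := by
  induction l with
  | nil => simp [pb]
  | cons c l ih =>
      rw [List.nodup_cons] at hl
      have hc : c ∉ l.toFinset := by simpa using hl.1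
      rw [pb_cons, List.toFinset_cons]
      rw [Finset.filter_insert]
      by_cases hxc : x c = true
      · rw [if_pos hxc, Finset.card_insert_of_notMem (fun h => hc (Finset.mem_of_mem_filter _ h))]
        rw [pow_succ, ← ih hl.2, hxc]
        cases pb l x <;> norm_num
      · rw [if_neg hxc, ← ih hl.2]
        simp only [Bool.not_eq_true] at hxc
        rw [hxc, Bool.false_xor]

end AncillaAux

/-- Ancilla-based circuit: with `a ∉ S`, `l` an enumeration of `S`, and
`V = CNOT_{i₁,a} ⋯ CNOT_{i_k,a}`, one has
(1) `V · exp(-j·α·Z_{{a}}) · V = exp(-j·α·Z_(S ∪ {a}))`, and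
(2) on every basis state with the ancilla `a` in `|0⟩`, the circuit acts as
`exp(-j·α·Z_S)`, i.e. it multiplies `e_x` by `exp(-j·α·(-1)^{|{i ∈ S : x i = true}|})`. -/
theorem ancilla_circuit {n : ℕ} (S : Finset (Fin n)) (a : Fin n) (ha : a ∉ S)
    (l : List (Fin n)) (hl : l.Nodup) (hlS : l.toFinset = S) (α : ℝ)
    (V : Matrix (Fin n → Bool) (Fin n → Bool) ℂ)
    (hV : V = (l.map fun i => CNOT i a).prod) :
    V * NormedSpace.exp ((-Complex.I * (α : ℂ)) • PauliZ {a}) * V =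
      NormedSpace.exp ((-Complex.I * (α : ℂ)) • PauliZ (insert a S)) ∧
    ∀ x : Fin n → Bool, x a = false →
      (V * NormedSpace.exp ((-Complex.I * (α : ℂ)) • PauliZ {a}) * V).mulVec (stdVec x) =
        Complex.exp (-Complex.I * (α : ℂ) *
            (-1 : ℂ) ^ (S.filter fun i => x i = true).card) • stdVec x := by
  have hal : a ∉ l := fun h => ha (hlS ▸ List.mem_toFinset.mpr h)
  -- exp of a scaled PauliZ is diagonal of complex exponentials
  have hexp : ∀ T : Finset (Fin n),
      NormedSpace.exp ((-Complex.I * (α : ℂ)) • PauliZ T)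
        = Matrix.diagonal fun x =>
            Complex.exp (-Complex.I * (α : ℂ) *
              (-1 : ℂ) ^ (T.filter fun i => x i = true).card) := by
    intro T
    rw [PauliZ, ← Matrix.diagonal_smul, Matrix.exp_diagonal]
    refine congrArg Matrix.diagonal (funext fun x => ?_)
    rw [Pi.coe_exp, Pi.smul_apply, smul_eq_mul, Complex.exp_eq_exp_ℂ]
  -- the key diagonal identity
  have key : ∀ x : Fin n → Bool,
      Complex.exp (-Complex.I * (α : ℂ) *
        (-1 : ℂ) ^ (({a} : Finset (Fin n)).filter fun i => AncillaAux.g a l x i = true).card)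
      = Complex.exp (-Complex.I * (α : ℂ) *
        (-1 : ℂ) ^ ((insert a S).filter fun i => x i = true).card) := by
    intro x
    congr 1
    have h1 : (({a} : Finset (Fin n)).filter fun i => AncillaAux.g a l x i = true).card
        = if AncillaAux.g a l x a then 1 else 0 := by
      rw [Finset.filter_singleton]
      by_cases h : AncillaAux.g a l x a = true <;> simp [h]
    have h2 : ((insert a S).filter fun i => x i = true).card
        = (S.filter fun i => x i = true).card + (if x a then 1 else 0) := by
      rw [Finset.filter_insert]
      by_cases h : x a = true
      · rw [if_pos h, Finset.card_insert_of_notMem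
          (fun hh => ha (Finset.mem_of_mem_filter _ hh)), h, if_pos rfl]
      · simp only [Bool.not_eq_true] at h
        rw [h]; simp
    rw [h1, h2, pow_add, AncillaAux.g_apply_a]
    rw [← hlS, ← AncillaAux.pb_eq_parity l hl x]
    cases hpb : AncillaAux.pb l x <;> cases hxa : x a <;> norm_num
  constructor
  · rw [hV, hexp, hexp, AncillaAux.conj_diagonal a l hal]
    exact congrArg Matrix.diagonal (funext fun x => key x)
  · intro x hx
    rw [hV, hexp, AncillaAux.conj_diagonal a l hal]
    funext y
    simp only [Matrix.mulVec, diagonal_dotProduct, stdVec, Pi.smul_apply, smul_eq_mul]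
    by_cases h : y = x
    · subst h
      rw [if_pos rfl, mul_one, mul_one, key]
      congr 2
      rw [Finset.filter_insert, hx]
      simp
    · rw [if_neg h, mul_zero, mul_zero]
end
end

section
/- On n = 2 qubits, for all real α₁, α₂, α₁₂: exp(−j·(α₁·Z_{{0}} + α₂·Z_{{1}})) · CNOT_{0,1} · exp(−j·α₁₂·Z_{{1}}) · CNOT_{0,1} = exp(−j·(α₁·Z_{{0}} + α₂·Z_{{1}} + α₁₂·Z_{{0,1}})). -/
open Matrix

noncomputable section

lemma cnot_invol (x : Fin 2 → Bool) : cnotFun 0 1 (cnotFun 0 1 x) = x := by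
  funext i
  fin_cases i <;> simp [cnotFun, Function.update]

lemma cnot_conj (d : (Fin 2 → Bool) → ℂ) :
    CNOT (0 : Fin 2) 1 * Matrix.diagonal d * CNOT 0 1
      = Matrix.diagonal (fun x => d (cnotFun 0 1 x)) := by
  ext y x
  simp only [Matrix.mul_apply, CNOT, Matrix.of_apply, Matrix.diagonal_apply, mul_ite, mul_zero,
    mul_one, ite_mul, zero_mul, Finset.sum_ite_eq, Finset.sum_ite_eq', Finset.mem_univ, if_true]
  rcases eq_or_ne y x with h | h
  · subst h; simp [cnot_invol]
  · have : y ≠ cnotFun 0 1 (cnotFun 0 1 x) := by rw [cnot_invol]; exact h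
    simp [this, h]

/-- diagonal entry function of a Pauli-Z monomial -/
def zfun {n : ℕ} (S : Finset (Fin n)) : (Fin n → Bool) → ℂ :=
  fun x => (-1 : ℂ) ^ (S.filter fun i => x i = true).card

lemma pauliZ_eq {n : ℕ} (S : Finset (Fin n)) : PauliZ S = Matrix.diagonal (zfun S) := rfl

/-- Correctness of the base template circuit `C₂` on two qubits. -/
theorem template_C2_correct (α₁ α₂ α₁₂ : ℝ) :
    NormedSpace.exp ((-Complex.I) •
        ((α₁ : ℂ) • PauliZ ({0} : Finset (Fin 2)) + (α₂ : ℂ) • PauliZ ({1} : Finset (Fin 2)))) *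
      CNOT (0 : Fin 2) 1 *
      NormedSpace.exp ((-Complex.I * (α₁₂ : ℂ)) • PauliZ ({1} : Finset (Fin 2))) *
      CNOT (0 : Fin 2) 1 =
    NormedSpace.exp ((-Complex.I) •
        ((α₁ : ℂ) • PauliZ ({0} : Finset (Fin 2)) + (α₂ : ℂ) • PauliZ ({1} : Finset (Fin 2)) +
          (α₁₂ : ℂ) • PauliZ ({0, 1} : Finset (Fin 2)))) := by
  simp only [pauliZ_eq, ← Matrix.diagonal_smul]
  simp only [Matrix.diagonal_add]
  simp only [← Matrix.diagonal_smul]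
  simp only [Matrix.exp_diagonal]
  rw [mul_assoc, mul_assoc, ← mul_assoc (CNOT (0:Fin 2) 1), cnot_conj,
    Matrix.diagonal_mul_diagonal]
  refine congrArg Matrix.diagonal (funext fun x => ?_)
  have h0 : cnotFun (0 : Fin 2) 1 x 0 = x 0 := by
    simp [cnotFun, Function.update]
  have h1 : cnotFun (0 : Fin 2) 1 x 1 = xor (x 1) (x 0) := by
    simp [cnotFun, Function.update]
  simp only [Pi.mul_apply, Pi.coe_exp, ← NormedSpace.exp_add]
  congr 1
  simp only [Pi.add_apply, Pi.smul_apply, Pi.neg_apply, smul_eq_mul, zfun]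
  cases hx0 : x 0 <;> cases hx1 : x 1 <;>
    simp [h0, h1, hx0, hx1, Finset.filter_insert, Finset.filter_singleton] <;> ring
end
end
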